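/- The Linial arrangement in ℝ⁴ consisting of the 6 affine hyperplanes x_i − x_j = 1 for 1 ≤ i < j ≤ 4 has exactly 36 maximal cells, i.e., the complement ℝ⁴ \ ⋃_{i<j} {x | x_i − x_j = 1} has exactly 36 connected components. -/

import Mathlib

open Set

/-- Sign vectors: one boolean per pair `i < j` in `Fin 4`. -/
abbrev LinV := Bool × Bool × Bool × Bool × Bool × Bool

/-- The complement of the Linial arrangement. -/
def linX : Set (Fin 4 → ℝ) := {x : Fin 4 → ℝ | ∀ i j : Fin 4, i < j → x i - x j ≠ 1}

/-- The sign vector of a point. -/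
noncomputable def linσ (x : Fin 4 → ℝ) : LinV :=
  (decide (x 0 - x 1 < 1), decide (x 0 - x 2 < 1), decide (x 0 - x 3 < 1),
   decide (x 1 - x 2 < 1), decide (x 1 - x 3 < 1), decide (x 2 - x 3 < 1))

noncomputable def linσ' : linX → LinV := fun x => linσ x.1

/-- Open halfspace attached to one sign. -/
def linC (b : Bool) (i j : Fin 4) : Set (Fin 4 → ℝ) :=
  if b then {z | z i - z j < 1} else {z | 1 < z i - z j}

/-- The open cell attached to a sign vector. -/
def linU (v : LinV) : Set (Fin 4 → ℝ) :=
  linC v.1 0 1 ∩ linC v.2.1 0 2 ∩ linC v.2.2.1 0 3 ∩ linC v.2.2.2.1 1 2 ∩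
    linC v.2.2.2.2.1 1 3 ∩ linC v.2.2.2.2.2 2 3

lemma linC_open (b : Bool) (i j : Fin 4) : IsOpen (linC b i j) := by
  have hc : Continuous fun z : Fin 4 → ℝ => z i - z j :=
    (continuous_apply i).sub (continuous_apply j)
  cases b <;> simp only [linC, if_true, if_false, Bool.false_eq_true]
  · exact isOpen_lt continuous_const hc
  · exact isOpen_lt hc continuous_const

lemma linC_convex (b : Bool) (i j : Fin 4) : Convex ℝ (linC b i j) := by
  have hl : IsLinearMap ℝ fun z : Fin 4 → ℝ => z i - z j :=
    ⟨fun a b => by simp [Pi.add_apply]; ring,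
     fun c a => by simp [Pi.smul_apply, smul_eq_mul]; ring⟩
  cases b <;> simp only [linC, if_true, if_false, Bool.false_eq_true]
  · exact convex_halfSpace_gt hl 1
  · exact convex_halfSpace_lt hl 1

lemma linC_ne {b : Bool} {i j : Fin 4} {z : Fin 4 → ℝ} (h : z ∈ linC b i j) :
    z i - z j ≠ 1 := by
  cases b <;> simp only [linC, if_true, if_false, Bool.false_eq_true, mem_setOf_eq] at h
  · exact (ne_of_lt h).symm
  · exact ne_of_lt h

lemma linU_open (v : LinV) : IsOpen (linU v) :=
  ((((((linC_open _ _ _).inter (linC_open _ _ _)).inter (linC_open _ _ _)).inter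
    (linC_open _ _ _)).inter (linC_open _ _ _)).inter (linC_open _ _ _))

lemma linU_convex (v : LinV) : Convex ℝ (linU v) :=
  ((((((linC_convex _ _ _).inter (linC_convex _ _ _)).inter (linC_convex _ _ _)).inter
    (linC_convex _ _ _)).inter (linC_convex _ _ _)).inter (linC_convex _ _ _))

lemma linU_subset (v : LinV) : linU v ⊆ linX := by
  rintro z ⟨⟨⟨⟨⟨h1, h2⟩, h3⟩, h4⟩, h5⟩, h6⟩ i j hij
  fin_cases i <;> fin_cases j <;>
    first
      | exact absurd hij (by decide)
      | exact linC_ne h1 | exact linC_ne h2 | exact linC_ne h3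
      | exact linC_ne h4 | exact linC_ne h5 | exact linC_ne h6

lemma pairKey {b : Bool} {r : ℝ} (h : r ≠ 1) :
    decide (r < 1) = b ↔ (if b then r < 1 else 1 < r) := by
  cases b
  · simp only [decide_eq_false_iff_not, if_false, Bool.false_eq_true]
    exact ⟨fun h' => lt_of_le_of_ne (not_lt.1 h') (Ne.symm h), fun h' => not_lt.2 h'.le⟩
  · simp [decide_eq_true_eq]

lemma linC_mem_iff {b : Bool} {i j : Fin 4} {z : Fin 4 → ℝ} (h : z i - z j ≠ 1) :
    z ∈ linC b i j ↔ decide (z i - z j < 1) = b := by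
  rw [pairKey h]; cases b <;> simp [linC]

/-- The fibers of the sign map are traces of the open cells. -/
lemma fiber_eq (v : LinV) :
    linσ' ⁻¹' {v} = (Subtype.val : linX → _) ⁻¹' linU v := by
  ext ⟨x, hx⟩
  simp only [mem_preimage, mem_singleton_iff, linσ', linσ, Prod.ext_iff, linU, mem_inter_iff]
  rw [linC_mem_iff (hx 0 1 (by decide)), linC_mem_iff (hx 0 2 (by decide)),
    linC_mem_iff (hx 0 3 (by decide)), linC_mem_iff (hx 1 2 (by decide)),
    linC_mem_iff (hx 1 3 (by decide)), linC_mem_iff (hx 2 3 (by decide))]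
  tauto

lemma linσ'_locallyConstant : IsLocallyConstant linσ' := by
  rw [IsLocallyConstant.iff_isOpen_fiber]
  intro v
  rw [fiber_eq]
  exact (linU_open v).preimage continuous_subtype_val

/-- The sign map factors through connected components. -/
noncomputable def linσbar : ConnectedComponents linX → LinV :=
  linσ'_locallyConstant.continuous.connectedComponentsLift

lemma linσbar_inj : Function.Injective linσbar := by
  intro a b h
  obtain ⟨x, rfl⟩ := ConnectedComponents.surjective_coe a
  obtain ⟨y, rfl⟩ := ConnectedComponents.surjective_coe b
  rw [ConnectedComponents.coe_eq_coe]
  have hxy : linσ' x = linσ' y := by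
    simpa only [linσbar, Continuous.connectedComponentsLift_apply_coe] using h
  set A : Set linX := (Subtype.val : linX → _) ⁻¹' linU (linσ' x) with hA
  have hxA : x ∈ A := by rw [hA, ← fiber_eq]; exact rfl
  have hyA : y ∈ A := by rw [hA, ← fiber_eq]; exact hxy.symm
  have hpre : IsPreconnected A := by
    rw [← Topology.IsInducing.subtypeVal.isPreconnected_image]
    rw [hA, Subtype.image_preimage_coe, inter_eq_right.2 (linU_subset _)]
    exact (linU_convex _).isPreconnected
  exact connectedComponent_eq (hpre.subset_connectedComponent hxA hyA)

/-- The realizable sign vectors. -/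
def linOK : LinV → Bool := fun v =>
  match v with
  | (b1, b2, b3, b4, b5, b6) =>
    (b1 || b4 || !b2) && (b1 || b5 || !b3) && (b2 || b6 || !b3) && (b4 || b6 || !b5) &&
    !(b1 && b2 && !b3 && !b4 && b5 && b6) && !(b1 && !b2 && b3 && b4 && !b5 && b6) &&
    !(b1 && !b2 && !b3 && b4 && b5 && !b6) && !(!b1 && b2 && !b3 && b4 && !b5 && b6)

def linT : Finset LinV := Finset.univ.filter (fun v => linOK v = true)

lemma linT_card : linT.card = 36 := by decide

lemma range_subset : Set.range linσ' ⊆ ↑linT := by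
  rintro v ⟨⟨x, hx⟩, rfl⟩
  simp only [Finset.coe_filter, linT, Finset.mem_univ, true_and, mem_setOf_eq]
  show linOK (linσ ((⟨x, hx⟩ : linX) : Fin 4 → ℝ)) = true
  simp only [linσ]
  cases h1 : decide (x 0 - x 1 < 1) <;> cases h2 : decide (x 0 - x 2 < 1) <;>
    cases h3 : decide (x 0 - x 3 < 1) <;> cases h4 : decide (x 1 - x 2 < 1) <;>
    cases h5 : decide (x 1 - x 3 < 1) <;> cases h6 : decide (x 2 - x 3 < 1) <;>
    first
      | rfl
      | (exfalso;
         simp only [decide_eq_true_eq, decide_eq_false_iff_not] at h1 h2 h3 h4 h5 h6;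
         linarith)

lemma mem_linX {a b c d : ℝ} (h1 : a-b≠1) (h2 : a-c≠1) (h3 : a-d≠1)
    (h4 : b-c≠1) (h5 : b-d≠1) (h6 : c-d≠1) : ![a,b,c,d] ∈ linX := by
  intro i j hij
  fin_cases i <;> fin_cases j <;>
    first
      | exact absurd hij (by decide)
      | simpa using h1 | simpa using h2 | simpa using h3
      | simpa using h4 | simpa using h5 | simpa using h6

lemma subset_range : ↑linT ⊆ Set.range linσ' := by
  intro v hv
  rw [Finset.mem_coe] at hv
  fin_cases hv
  · exact ⟨⟨![(-14/5), (-14/5), (-14/5), (-14/5)], mem_linX (by norm_num) (by norm_num) (by norm_num)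
      (by norm_num) (by norm_num) (by norm_num)⟩, by simp only [linσ', linσ]; norm_num [Matrix.cons_val_two, Matrix.cons_val_three]⟩
  · exact ⟨⟨![(-14/5), (-14/5), (-7/5), (-14/5)], mem_linX (by norm_num) (by norm_num) (by norm_num)
      (by norm_num) (by norm_num) (by norm_num)⟩, by simp only [linσ', linσ]; norm_num [Matrix.cons_val_two, Matrix.cons_val_three]⟩
  · exact ⟨⟨![(-14/5), (-7/5), (-21/10), (-14/5)], mem_linX (by norm_num) (by norm_num) (by norm_num)
      (by norm_num) (by norm_num) (by norm_num)⟩, by simp only [linσ', linσ]; norm_num [Matrix.cons_val_two, Matrix.cons_val_three]⟩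
  · exact ⟨⟨![(-14/5), (-7/5), (-7/5), (-14/5)], mem_linX (by norm_num) (by norm_num) (by norm_num)
      (by norm_num) (by norm_num) (by norm_num)⟩, by simp only [linσ', linσ]; norm_num [Matrix.cons_val_two, Matrix.cons_val_three]⟩
  · exact ⟨⟨![(-14/5), (-7/5), (-14/5), (-21/10)], mem_linX (by norm_num) (by norm_num) (by norm_num)
      (by norm_num) (by norm_num) (by norm_num)⟩, by simp only [linσ', linσ]; norm_num [Matrix.cons_val_two, Matrix.cons_val_three]⟩
  · exact ⟨⟨![(-14/5), (-7/5), (-14/5), (-14/5)], mem_linX (by norm_num) (by norm_num) (by norm_num)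
      (by norm_num) (by norm_num) (by norm_num)⟩, by simp only [linσ', linσ]; norm_num [Matrix.cons_val_two, Matrix.cons_val_three]⟩
  · exact ⟨⟨![(-14/5), (0), (-7/5), (-14/5)], mem_linX (by norm_num) (by norm_num) (by norm_num)
      (by norm_num) (by norm_num) (by norm_num)⟩, by simp only [linσ', linσ]; norm_num [Matrix.cons_val_two, Matrix.cons_val_three]⟩
  · exact ⟨⟨![(-7/5), (-21/10), (-21/10), (-14/5)], mem_linX (by norm_num) (by norm_num) (by norm_num)
      (by norm_num) (by norm_num) (by norm_num)⟩, by simp only [linσ', linσ]; norm_num [Matrix.cons_val_two, Matrix.cons_val_three]⟩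
  · exact ⟨⟨![(-7/5), (-21/10), (-7/5), (-14/5)], mem_linX (by norm_num) (by norm_num) (by norm_num)
      (by norm_num) (by norm_num) (by norm_num)⟩, by simp only [linσ', linσ]; norm_num [Matrix.cons_val_two, Matrix.cons_val_three]⟩
  · exact ⟨⟨![(-7/5), (-7/5), (-21/10), (-14/5)], mem_linX (by norm_num) (by norm_num) (by norm_num)
      (by norm_num) (by norm_num) (by norm_num)⟩, by simp only [linσ', linσ]; norm_num [Matrix.cons_val_two, Matrix.cons_val_three]⟩
  · exact ⟨⟨![(-7/5), (-7/5), (-7/5), (-14/5)], mem_linX (by norm_num) (by norm_num) (by norm_num)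
      (by norm_num) (by norm_num) (by norm_num)⟩, by simp only [linσ', linσ]; norm_num [Matrix.cons_val_two, Matrix.cons_val_three]⟩
  · exact ⟨⟨![(-7/5), (-7/10), (-21/10), (-14/5)], mem_linX (by norm_num) (by norm_num) (by norm_num)
      (by norm_num) (by norm_num) (by norm_num)⟩, by simp only [linσ', linσ]; norm_num [Matrix.cons_val_two, Matrix.cons_val_three]⟩
  · exact ⟨⟨![(-7/5), (0), (-7/5), (-14/5)], mem_linX (by norm_num) (by norm_num) (by norm_num)
      (by norm_num) (by norm_num) (by norm_num)⟩, by simp only [linσ', linσ]; norm_num [Matrix.cons_val_two, Matrix.cons_val_three]⟩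
  · exact ⟨⟨![(-7/5), (-21/10), (-14/5), (-21/10)], mem_linX (by norm_num) (by norm_num) (by norm_num)
      (by norm_num) (by norm_num) (by norm_num)⟩, by simp only [linσ', linσ]; norm_num [Matrix.cons_val_two, Matrix.cons_val_three]⟩
  · exact ⟨⟨![(-7/5), (-7/5), (-14/5), (-21/10)], mem_linX (by norm_num) (by norm_num) (by norm_num)
      (by norm_num) (by norm_num) (by norm_num)⟩, by simp only [linσ', linσ]; norm_num [Matrix.cons_val_two, Matrix.cons_val_three]⟩
  · exact ⟨⟨![(-7/5), (-7/10), (-14/5), (-21/10)], mem_linX (by norm_num) (by norm_num) (by norm_num)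
      (by norm_num) (by norm_num) (by norm_num)⟩, by simp only [linσ', linσ]; norm_num [Matrix.cons_val_two, Matrix.cons_val_three]⟩
  · exact ⟨⟨![(-7/5), (-21/10), (-14/5), (-14/5)], mem_linX (by norm_num) (by norm_num) (by norm_num)
      (by norm_num) (by norm_num) (by norm_num)⟩, by simp only [linσ', linσ]; norm_num [Matrix.cons_val_two, Matrix.cons_val_three]⟩
  · exact ⟨⟨![(-7/10), (-7/5), (-21/10), (-14/5)], mem_linX (by norm_num) (by norm_num) (by norm_num)
      (by norm_num) (by norm_num) (by norm_num)⟩, by simp only [linσ', linσ]; norm_num [Matrix.cons_val_two, Matrix.cons_val_three]⟩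
  · exact ⟨⟨![(0), (-7/10), (-7/5), (-14/5)], mem_linX (by norm_num) (by norm_num) (by norm_num)
      (by norm_num) (by norm_num) (by norm_num)⟩, by simp only [linσ', linσ]; norm_num [Matrix.cons_val_two, Matrix.cons_val_three]⟩
  · exact ⟨⟨![(-7/10), (-7/5), (-14/5), (-21/10)], mem_linX (by norm_num) (by norm_num) (by norm_num)
      (by norm_num) (by norm_num) (by norm_num)⟩, by simp only [linσ', linσ]; norm_num [Matrix.cons_val_two, Matrix.cons_val_three]⟩
  · exact ⟨⟨![(-7/5), (-7/5), (-14/5), (-14/5)], mem_linX (by norm_num) (by norm_num) (by norm_num)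
      (by norm_num) (by norm_num) (by norm_num)⟩, by simp only [linσ', linσ]; norm_num [Matrix.cons_val_two, Matrix.cons_val_three]⟩
  · exact ⟨⟨![(0), (0), (-7/5), (-14/5)], mem_linX (by norm_num) (by norm_num) (by norm_num)
      (by norm_num) (by norm_num) (by norm_num)⟩, by simp only [linσ', linσ]; norm_num [Matrix.cons_val_two, Matrix.cons_val_three]⟩
  · exact ⟨⟨![(-7/5), (-14/5), (-21/10), (-21/10)], mem_linX (by norm_num) (by norm_num) (by norm_num)
      (by norm_num) (by norm_num) (by norm_num)⟩, by simp only [linσ', linσ]; norm_num [Matrix.cons_val_two, Matrix.cons_val_three]⟩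
  · exact ⟨⟨![(-7/5), (-14/5), (-7/10), (-21/10)], mem_linX (by norm_num) (by norm_num) (by norm_num)
      (by norm_num) (by norm_num) (by norm_num)⟩, by simp only [linσ', linσ]; norm_num [Matrix.cons_val_two, Matrix.cons_val_three]⟩
  · exact ⟨⟨![(-7/5), (-14/5), (-21/10), (-14/5)], mem_linX (by norm_num) (by norm_num) (by norm_num)
      (by norm_num) (by norm_num) (by norm_num)⟩, by simp only [linσ', linσ]; norm_num [Matrix.cons_val_two, Matrix.cons_val_three]⟩
  · exact ⟨⟨![(-7/5), (-14/5), (-7/5), (-14/5)], mem_linX (by norm_num) (by norm_num) (by norm_num)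
      (by norm_num) (by norm_num) (by norm_num)⟩, by simp only [linσ', linσ]; norm_num [Matrix.cons_val_two, Matrix.cons_val_three]⟩
  · exact ⟨⟨![(0), (-7/5), (-7/10), (-14/5)], mem_linX (by norm_num) (by norm_num) (by norm_num)
      (by norm_num) (by norm_num) (by norm_num)⟩, by simp only [linσ', linσ]; norm_num [Matrix.cons_val_two, Matrix.cons_val_three]⟩
  · exact ⟨⟨![(-7/5), (-14/5), (-14/5), (-21/10)], mem_linX (by norm_num) (by norm_num) (by norm_num)
      (by norm_num) (by norm_num) (by norm_num)⟩, by simp only [linσ', linσ]; norm_num [Matrix.cons_val_two, Matrix.cons_val_three]⟩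
  · exact ⟨⟨![(0), (-7/5), (-14/5), (-7/10)], mem_linX (by norm_num) (by norm_num) (by norm_num)
      (by norm_num) (by norm_num) (by norm_num)⟩, by simp only [linσ', linσ]; norm_num [Matrix.cons_val_two, Matrix.cons_val_three]⟩
  · exact ⟨⟨![(-7/5), (-14/5), (-14/5), (-14/5)], mem_linX (by norm_num) (by norm_num) (by norm_num)
      (by norm_num) (by norm_num) (by norm_num)⟩, by simp only [linσ', linσ]; norm_num [Matrix.cons_val_two, Matrix.cons_val_three]⟩
  · exact ⟨⟨![(0), (-14/5), (-7/5), (-14/5)], mem_linX (by norm_num) (by norm_num) (by norm_num)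
      (by norm_num) (by norm_num) (by norm_num)⟩, by simp only [linσ', linσ]; norm_num [Matrix.cons_val_two, Matrix.cons_val_three]⟩
  · exact ⟨⟨![(0), (-7/5), (-21/10), (-14/5)], mem_linX (by norm_num) (by norm_num) (by norm_num)
      (by norm_num) (by norm_num) (by norm_num)⟩, by simp only [linσ', linσ]; norm_num [Matrix.cons_val_two, Matrix.cons_val_three]⟩
  · exact ⟨⟨![(0), (-7/5), (-7/5), (-14/5)], mem_linX (by norm_num) (by norm_num) (by norm_num)
      (by norm_num) (by norm_num) (by norm_num)⟩, by simp only [linσ', linσ]; norm_num [Matrix.cons_val_two, Matrix.cons_val_three]⟩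
  · exact ⟨⟨![(0), (-7/5), (-14/5), (-21/10)], mem_linX (by norm_num) (by norm_num) (by norm_num)
      (by norm_num) (by norm_num) (by norm_num)⟩, by simp only [linσ', linσ]; norm_num [Matrix.cons_val_two, Matrix.cons_val_three]⟩
  · exact ⟨⟨![(0), (-7/5), (-14/5), (-14/5)], mem_linX (by norm_num) (by norm_num) (by norm_num)
      (by norm_num) (by norm_num) (by norm_num)⟩, by simp only [linσ', linσ]; norm_num [Matrix.cons_val_two, Matrix.cons_val_three]⟩
  · exact ⟨⟨![(7/5), (0), (-7/5), (-14/5)], mem_linX (by norm_num) (by norm_num) (by norm_num)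
      (by norm_num) (by norm_num) (by norm_num)⟩, by simp only [linσ', linσ]; norm_num [Matrix.cons_val_two, Matrix.cons_val_three]⟩

lemma range_eq : Set.range linσ' = ↑linT :=
  le_antisymm range_subset subset_range

lemma range_bar_eq : Set.range linσbar = ↑linT := by
  rw [← range_eq]
  ext v
  constructor
  · rintro ⟨c, rfl⟩
    obtain ⟨x, rfl⟩ := ConnectedComponents.surjective_coe c
    exact ⟨x, (Continuous.connectedComponentsLift_apply_coe _ _).symm⟩
  · rintro ⟨x, rfl⟩
    exact ⟨x, Continuous.connectedComponentsLift_apply_coe _ _⟩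

/-- The Linial arrangement in ℝ⁴ (the 6 affine hyperplanes xᵢ − xⱼ = 1 for
i < j) has exactly 36 maximal cells: its complement has 36 connected
components. -/
theorem linial_arrangement_R4_has_36_cells :
    Nat.card (ConnectedComponents
        ({x : Fin 4 → ℝ | ∀ i j : Fin 4, i < j → x i - x j ≠ 1} : Set (Fin 4 → ℝ)))
      = 36 := by
  have e : ConnectedComponents linX ≃ ↥(↑linT : Set LinV) :=
    (Equiv.ofInjective linσbar linσbar_inj).trans (Equiv.setCongr range_bar_eq)
  calc Nat.card (ConnectedComponents linX) = Nat.card ↥(↑linT : Set LinV) := Nat.card_congr e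
    _ = linT.card := by rw [Nat.card_coe_set_eq, Set.ncard_coe_finset]
    _ = 36 := linT_card
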